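/- Let i ∈ [r], and let α and α⁻ = α − ε_i both be pseudopartitions of length r with α_i ≥ α_{i−1}. Let n = (n_1,…,n_r) ∈ [r]^r and n⁺ = n + ε_i both be weakly increasing. Then CTAB_α(n) is the disjoint union of CTAB_α(n⁺) and the set of tableaux obtained from elements U of CTAB_{α⁻}(n) by adjoining a box containing the entry n_i at the left end of row i. -/

import Mathlib

open scoped BigOperators Classical

noncomputable section

/-- The coefficient ring `ℤ[t]`, with `t = Polynomial.X`. -/
abbrev CR : Type := Polynomial ℤ

/-- The ring of symmetric functions `Λ = ℤ[t][h₁,h₂,…]`, modeled as the polynomial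
ring over `ℤ[t]` in countably many variables, where the variable `X n`
represents the complete homogeneous symmetric function `h_{n+1}`. -/
abbrev SymF : Type := MvPolynomial ℕ CR

/-- `t` as an element of `Λ`. -/
def tC : SymF := MvPolynomial.C Polynomial.X

/-- The complete homogeneous symmetric function `h_d` for `d : ℤ`:
`h_0 = 1` and `h_d = 0` for `d < 0`. -/
def hh (d : ℤ) : SymF :=
  if d < 0 then 0 else if d = 0 then 1 else MvPolynomial.X (d.toNat - 1)

/-- The (possibly non-partition-indexed) Schur function
`s_γ = det (h_{γ_i + j - i})_{1 ≤ i,j ≤ ℓ}`. -/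
def schur {ℓ : ℕ} (γ : Fin ℓ → ℤ) : SymF :=
  (Matrix.of fun i j : Fin ℓ => hh (γ i + (j : ℤ) - (i : ℤ))).det

/-- The poset of positive roots `Δ⁺_ℓ = {(i,j) : 1 ≤ i < j ≤ ℓ}` (0-based here). -/
def Dplus (ℓ : ℕ) : Finset (Fin ℓ × Fin ℓ) := Finset.univ.filter fun p => p.1 < p.2

/-- `Ψ` is a root ideal: an upper order ideal of `Δ⁺_ℓ`, where
`(a,b) ≤ (c,d)` iff `a ≥ c` and `b ≤ d`. -/
def IsRootIdeal {ℓ : ℕ} (Ψ : Finset (Fin ℓ × Fin ℓ)) : Prop :=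
  Ψ ⊆ Dplus ℓ ∧ ∀ p ∈ Ψ, ∀ q ∈ Dplus ℓ, q.1 ≤ p.1 → p.2 ≤ q.2 → q ∈ Ψ

/-- The Catalan function `H(Ψ;γ) = ∏_{(i,j) ∈ Ψ} (1 - t R_{ij})⁻¹ s_γ`, written out
as the (finitely supported) sum over all ways `n` of applying raising operators
`R_{ij}` with `(i,j) ∈ Ψ`. -/
def catalanFn {ℓ : ℕ} (Ψ : Finset (Fin ℓ × Fin ℓ)) (γ : Fin ℓ → ℤ) : SymF :=
  ∑ᶠ n : Fin ℓ × Fin ℓ → ℕ,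
    if ∀ p, p ∉ Ψ → n p = 0 then
      tC ^ (∑ p : Fin ℓ × Fin ℓ, n p) *
        schur (fun a => γ a + ∑ p : Fin ℓ × Fin ℓ,
          (n p : ℤ) * ((if p.1 = a then 1 else 0) - (if p.2 = a then 1 else 0)))
    else 0

/-- `nr(Ψ)_i`: the number of non-roots of `Ψ` in row `i` (0-based row index,
extended by `0` out of range). -/
def nrN {ℓ : ℕ} (Ψ : Finset (Fin ℓ × Fin ℓ)) (i : ℕ) : ℕ :=
  ((Dplus ℓ \ Ψ).filter fun p => (p.1 : ℕ) = i).card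

/-- `μ ∈ Par^k_ℓ`: a partition with at most `ℓ` parts, all of size at most `k`. -/
def IsPartitionK (k : ℕ) {ℓ : ℕ} (μ : Fin ℓ → ℕ) : Prop :=
  (∀ i j : Fin ℓ, i ≤ j → μ j ≤ μ i) ∧ ∀ i, μ i ≤ k

/-- The root ideal `Δᵏ(μ) = {(i,j) ∈ Δ⁺_ℓ : k - μ_i + i < j}` (1-based), here with
0-based indices. -/
def Dk (k : ℕ) {ℓ : ℕ} (μ : Fin ℓ → ℕ) : Finset (Fin ℓ × Fin ℓ) :=
  (Dplus ℓ).filter fun p => (k : ℤ) - μ p.1 + (p.1 : ℤ) < (p.2 : ℤ)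

/-- The `k`-Schur Catalan function `s^{(k)}_μ = H(Δᵏ(μ); μ)`. -/
def kSchur (k : ℕ) {ℓ : ℕ} (μ : Fin ℓ → ℕ) : SymF :=
  catalanFn (Dk k μ) fun i => (μ i : ℤ)

/-- The modified Hall–Littlewood polynomial `H_μ(x;t) = H(Δ⁺;μ)`. -/
def hallLittlewood {ℓ : ℕ} (μ : Fin ℓ → ℕ) : SymF :=
  catalanFn (Dplus ℓ) fun i => (μ i : ℤ)

/-- `Λᵏ`, the `ℤ[t]`-span of the modified Hall–Littlewood polynomials `H_μ`
for `μ ∈ Par^k`. -/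
def LambdaK (k : ℕ) : Submodule CR SymF :=
  Submodule.span CR {f | ∃ (ℓ : ℕ) (μ : Fin ℓ → ℕ),
    IsPartitionK k μ ∧ (∀ i, 0 < μ i) ∧ f = hallLittlewood μ}

/-- Extend a finite tuple by zeros. -/
def extendFin {ℓ : ℕ} (μ : Fin ℓ → ℕ) : ℕ → ℕ := fun i => if h : i < ℓ then μ ⟨i, h⟩ else 0

/-- Extend a finite integer tuple by zeros. -/
def extendFinZ {ℓ : ℕ} (γ : Fin ℓ → ℤ) : ℕ → ℤ := fun i => if h : i < ℓ then γ ⟨i, h⟩ else 0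

/-- `style(Ψ,γ)_i = nr(Ψ)_i + γ_i` (0-based row index `i`). -/
def styleZN {ℓ : ℕ} (Ψ : Finset (Fin ℓ × Fin ℓ)) (γ : Fin ℓ → ℤ) (i : ℕ) : ℤ :=
  (nrN Ψ i : ℤ) + extendFinZ γ i


section CTAB

/-- A pseudopartition of length `r`: `α ∈ ℕ^r` with
`α_1 + r - 1 ≥ α_2 + r - 2 ≥ ⋯ ≥ α_r`. -/
def IsPseudoPartition {r : ℕ} (α : Fin r → ℕ) : Prop :=
  ∀ i j : Fin r, i ≤ j → (α j : ℤ) + (i : ℤ) ≤ (α i : ℤ) + (j : ℤ)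

/-- A member of `CTAB_α(n)`: a filling of the right-justified diagram of the
pseudopartition `α` (row `i < r` has boxes in positions `q = 1, …, α_i`, where `q`
counts columns from the *right*; this matches `diagram(α) = {(i,j) : m - α_i < j ≤ m}`
with `m = max α`), recorded as a function `F` that is zero off the boxes, such that
(I) entries weakly increase from left to right in rows, (II) entries strictly
increase down columns, (III) entries in row `i` lie in `{n_i, …, r}`, and (IV) if
row `i` has a box in a column where row `i+1` does not, then its entry is `< n_{i+1}`. -/
def IsCTAB (r : ℕ) (α nf : ℕ → ℕ) (F : ℕ → ℕ → ℕ) : Prop :=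
  (∀ i q, ¬(i < r ∧ 1 ≤ q ∧ q ≤ α i) → F i q = 0) ∧
  (∀ i q, i < r → 1 ≤ q → q + 1 ≤ α i → F i (q + 1) ≤ F i q) ∧
  (∀ i q, i + 1 < r → 1 ≤ q → q ≤ α i → q ≤ α (i + 1) → F i q < F (i + 1) q) ∧
  (∀ i q, i < r → 1 ≤ q → q ≤ α i → nf i ≤ F i q ∧ F i q ≤ r) ∧
  (∀ i q, i + 1 < r → α (i + 1) < q → q ≤ α i → F i q < nf (i + 1))

/-- Adjoin to a filling a box with entry `x` at position `q0` (counted from the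
right) of row `i0`; adjoining at the left end of row `i0` of `diagram(α - ε_{i0})`
is `addBox i0 (α i0) x`. -/
def addBox (i0 q0 x : ℕ) (F : ℕ → ℕ → ℕ) : ℕ → ℕ → ℕ :=
  fun i q => if i = i0 ∧ q = q0 then x else F i q

/-- The column reading word of a member of `CTAB_α(n)` (with `m = max α`):
columns left to right (`q = m` down to `1`), each column bottom to top. -/
def creadingCTAB (r m : ℕ) (α : ℕ → ℕ) (F : ℕ → ℕ → ℕ) : List ℕ :=
  (List.range m).flatMap fun c =>
    ((List.range r).reverse).filterMap fun i =>
      if 1 ≤ m - c ∧ m - c ≤ α i then some (F i (m - c)) else none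

end CTAB

private lemma ctab_row_mono {r : ℕ} {A : ℕ → ℕ} {F : ℕ → ℕ → ℕ}
    (h1 : ∀ i q, i < r → 1 ≤ q → q + 1 ≤ A i → F i (q + 1) ≤ F i q)
    {i q q' : ℕ} (hi : i < r) (hq : 1 ≤ q) (hqq : q ≤ q') :
    q' ≤ A i → F i q' ≤ F i q := by
  induction q', hqq using Nat.le_induction with
  | base => intro _; exact le_rfl
  | succ m hm ih => intro h; exact le_trans (h1 i m hi (by omega) h) (ih (by omega))

/-- Let `i₀ ∈ [r]`, and let `α` and `α⁻ = α - ε_{i₀}` both be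
pseudopartitions of length `r` with `α_{i₀} ≥ α_{i₀-1}`.  Let `n ∈ [r]^r` and
`n⁺ = n + ε_{i₀}` both be weakly increasing.  Then `CTAB_α(n)` is the disjoint
union of `CTAB_α(n⁺)` and the image of `CTAB_{α⁻}(n)` under adjoining a box with
entry `n_{i₀}` at the left end of row `i₀`. -/
theorem ctab_decomposition (r : ℕ) (i0 : Fin r) (α : Fin r → ℕ) (hpos : 0 < α i0)
    (hα : IsPseudoPartition α)
    (hα' : IsPseudoPartition fun j => α j - if j = i0 then 1 else 0)
    (hprev : ∀ _ : 0 < (i0 : ℕ),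
      α ⟨(i0 : ℕ) - 1, by have := i0.isLt; omega⟩ ≤ α i0)
    (nf : Fin r → ℕ) (hnf : ∀ j, 1 ≤ nf j ∧ nf j ≤ r)
    (hmono : Monotone nf)
    (hmono' : Monotone fun j => nf j + if j = i0 then 1 else 0) :
    {F | IsCTAB r (extendFin α) (extendFin nf) F} =
        {F | IsCTAB r (extendFin α)
            (extendFin fun j => nf j + if j = i0 then 1 else 0) F} ∪
          ((fun F => addBox (i0 : ℕ) (α i0) (nf i0) F) ''
            {F | IsCTAB r (extendFin fun j => α j - if j = i0 then 1 else 0)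
              (extendFin nf) F}) ∧
      Disjoint
        {F | IsCTAB r (extendFin α)
            (extendFin fun j => nf j + if j = i0 then 1 else 0) F}
        ((fun F => addBox (i0 : ℕ) (α i0) (nf i0) F) ''
          {F | IsCTAB r (extendFin fun j => α j - if j = i0 then 1 else 0)
            (extendFin nf) F}) := by
  set i1 : ℕ := (i0 : ℕ) with hi1
  set A : ℕ → ℕ := extendFin α with hA
  set Am : ℕ → ℕ := extendFin (fun j => α j - if j = i0 then 1 else 0) with hAm
  set N : ℕ → ℕ := extendFin nf with hN
  set Np : ℕ → ℕ := extendFin (fun j => nf j + if j = i0 then 1 else 0) with hNp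
  have hi1r : i1 < r := i0.isLt
  have he : (⟨i1, hi1r⟩ : Fin r) = i0 := rfl
  have hAi1 : A i1 = α i0 := by
    simp only [hA, extendFin, dif_pos hi1r, he]
  have hNi1 : N i1 = nf i0 := by
    simp only [hN, extendFin, dif_pos hi1r, he]
  have hApos : 1 ≤ A i1 := by omega
  have hAmi0 : Am i1 = A i1 - 1 := by
    simp [hAm, hA, extendFin, hi1r, he]
  have hAmne : ∀ i, i ≠ i1 → Am i = A i := by
    intro i hne
    by_cases h : i < r
    · simp only [hAm, hA, extendFin, dif_pos h]
      rw [if_neg (fun he => hne (congrArg Fin.val he)), Nat.sub_zero]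
    · simp [hAm, hA, extendFin, h]
  have hAmle : ∀ i, Am i ≤ A i := by
    intro i
    by_cases hne : i = i1
    · subst hne; omega
    · rw [hAmne i hne]
  have hNp0 : Np i1 = N i1 + 1 := by
    simp [hNp, hN, extendFin, hi1r, he]
  have hNpne : ∀ i, i ≠ i1 → Np i = N i := by
    intro i hne
    by_cases h : i < r
    · simp only [hNp, hN, extendFin, dif_pos h]
      rw [if_neg (fun he => hne (congrArg Fin.val he)), Nat.add_zero]
    · simp [hNp, hN, extendFin, h]
  have hNr : ∀ i, i < r → 1 ≤ N i ∧ N i ≤ r := by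
    intro i h
    simp only [hN, extendFin, dif_pos h]
    exact hnf _
  have hstep : i1 + 1 < r → N i1 + 1 ≤ N (i1 + 1) := by
    intro h
    have hle : i0 ≤ (⟨i1 + 1, h⟩ : Fin r) := by
      rw [Fin.le_def]
      simp only
      omega
    have hne : (⟨i1 + 1, h⟩ : Fin r) ≠ i0 := by
      intro he
      have := congrArg Fin.val he
      simp only at this
      omega
    have hm := hmono' hle
    simp [hne] at hm
    have hN1 : N (i1 + 1) = nf ⟨i1 + 1, h⟩ := by
      simp only [hN, extendFin, dif_pos h]
    omega
  have hprevN : ∀ i, i + 1 = i1 → A i ≤ A i1 := by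
    intro i hi
    have h0 : 0 < i1 := by omega
    have hAi : A i = α ⟨i1 - 1, by omega⟩ := by
      simp only [hA, extendFin, dif_pos (show i < r by omega)]
      congr 1
      exact Fin.mk_eq_mk.mpr (by omega)
    rw [hAi, hAi1]
    exact hprev h0
  -- two of the three inclusions, as lemmas
  have L1 : ∀ F, IsCTAB r A Np F → IsCTAB r A N F := by
    intro F ⟨f0, f1, f2, f3, f4⟩
    refine ⟨f0, f1, f2, ?_, ?_⟩
    · intro i q hi hq hqa
      have h3 := f3 i q hi hq hqa
      by_cases hii : i = i1
      · subst hii; omega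
      · rw [hNpne i hii] at h3; exact h3
    · intro i q hi hq hqa
      by_cases hii : i + 1 = i1
      · have := hprevN i hii
        rw [hii] at hq
        omega
      · have h4 := f4 i q hi hq hqa
        rw [hNpne (i + 1) hii] at h4
        exact h4
  have L2 : ∀ G, IsCTAB r Am N G →
      IsCTAB r A N (addBox i1 (α i0) (nf i0) G) := by
    intro G ⟨g0, g1, g2, g3, g4⟩
    rw [← hAi1, ← hNi1]
    have hbox : ∀ i q, ¬(i = i1 ∧ q = A i1) →
        addBox i1 (A i1) (N i1) G i q = G i q := by
      intro i q h; simp only [addBox, if_neg h]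
    have hboxv : addBox i1 (A i1) (N i1) G i1 (A i1) = N i1 := by
      simp [addBox]
    refine ⟨?_, ?_, ?_, ?_, ?_⟩
    · intro i q h
      rw [hbox i q (by rintro ⟨rfl, rfl⟩; exact h ⟨hi1r, hApos, le_rfl⟩)]
      refine g0 i q ?_
      rintro ⟨hr, h1, h2⟩
      exact h ⟨hr, h1, le_trans h2 (hAmle i)⟩
    · intro i q hi hq hqa
      by_cases hii : i = i1
      · subst hii
        by_cases hq1 : q + 1 = A i1
        · rw [hbox i1 q (by omega), show addBox i1 (A i1) (N i1) G i1 (q+1) = N i1 by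
            rw [← hq1] at hboxv ⊢; exact hboxv]
          exact (g3 i1 q hi1r hq (by omega)).1
        · rw [hbox i1 q (by omega), hbox i1 (q+1) (by omega)]
          exact g1 i1 q hi1r hq (by omega)
      · rw [hbox i q (by omega), hbox i (q+1) (by omega)]
        exact g1 i q hi hq (by rw [hAmne i hii]; omega)
    · intro i q hi hq hqa hqa'
      by_cases hii : i = i1
      · subst hii
        have ha1 : Am (i1 + 1) = A (i1 + 1) := hAmne _ (by omega)
        rw [hbox (i1+1) q (by omega)]
        by_cases hqA : q = A i1
        · subst hqA
          rw [hboxv]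
          have := hstep hi
          have := (g3 (i1+1) (A i1) hi hq (by omega)).1
          omega
        · rw [hbox i1 q (by omega)]
          exact g2 i1 q hi hq (by omega) (by omega)
      · have ha0 : Am i = A i := hAmne _ hii
        rw [hbox i q (by omega)]
        by_cases hii' : i + 1 = i1
        · by_cases hqA : q = A i1
          · subst hqA
            rw [hii', hboxv]
            have h2 := g4 i (A i1) hi (by rw [hii']; omega)
              (by rw [hAmne i hii]; omega)
            rwa [hii'] at h2
          · rw [hii'] at hqa'
            rw [hbox (i+1) q (by omega)]
            exact g2 i q hi hq (by omega) (by rw [hii', hAmi0]; omega)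
        · have ha1 : Am (i + 1) = A (i + 1) := hAmne _ hii'
          rw [hbox (i+1) q (by omega)]
          exact g2 i q hi hq (by omega) (by omega)
    · intro i q hi hq hqa
      by_cases hii : i = i1
      · subst hii
        by_cases hqA : q = A i1
        · subst hqA
          rw [hboxv]
          exact ⟨le_rfl, (hNr i1 hi1r).2⟩
        · rw [hbox i1 q (by omega)]
          exact g3 i1 q hi hq (by omega)
      · rw [hbox i q (by omega)]
        exact g3 i q hi hq (by rw [hAmne i hii]; omega)
    · intro i q hi hqa hqa'
      by_cases hii' : i + 1 = i1
      · have := hprevN i hii'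
        rw [hii'] at hqa
        omega
      · have ha1 : Am (i + 1) = A (i + 1) := hAmne _ hii'
        by_cases hii : i = i1
        · subst hii
          by_cases hqA : q = A i1
          · subst hqA
            rw [hboxv]
            have := hstep hi
            omega
          · rw [hbox i1 q (by omega)]
            exact g4 i1 q hi (by omega) (by omega)
        · have ha0 : Am i = A i := hAmne _ hii
          rw [hbox i q (by omega)]
          exact g4 i q hi (by omega) (by omega)
  refine ⟨?_, ?_⟩
  · ext F
    simp only [Set.mem_setOf_eq, Set.mem_union, Set.mem_image]
    constructor
    · intro hF
      obtain ⟨f0, f1, f2, f3, f4⟩ := hF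
      have hx := f3 i1 (A i1) hi1r hApos le_rfl
      by_cases hxc : N i1 + 1 ≤ F i1 (A i1)
      · -- F ∈ CTAB(n⁺)
        left
        refine ⟨f0, f1, f2, ?_, ?_⟩
        · intro i q hi hq hqa
          have h3 := f3 i q hi hq hqa
          by_cases hii : i = i1
          · subst hii
            have hrm : F i1 (A i1) ≤ F i1 q := ctab_row_mono f1 hi hq hqa le_rfl
            omega
          · rw [hNpne i hii]; exact h3
        · intro i q hi hqa hqa'
          by_cases hii : i + 1 = i1
          · have := hprevN i hii
            rw [hii] at hqa
            omega
          · rw [hNpne (i+1) hii]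
            exact f4 i q hi hqa hqa'
      · -- F is addBox of G
        right
        have hxe : F i1 (A i1) = N i1 := by omega
        set G : ℕ → ℕ → ℕ := fun i q => if i = i1 ∧ q = A i1 then 0 else F i q with hG
        have hGrec : ∀ i q, ¬(i = i1 ∧ q = A i1) → G i q = F i q := by
          intro i q h; simp only [hG, if_neg h]
        refine ⟨G, ⟨?_, ?_, ?_, ?_, ?_⟩, ?_⟩
        · intro i q h
          by_cases hb : i = i1 ∧ q = A i1
          · simp only [hG, if_pos hb]
          · rw [hGrec i q hb]
            refine f0 i q ?_
            rintro ⟨hr, h1, h2⟩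
            refine h ⟨hr, h1, ?_⟩
            by_cases hii : i = i1
            · subst hii; omega
            · rw [hAmne i hii]; omega
        · intro i q hi hq hqa
          have hAmle' : Am i ≤ A i := hAmle i
          rw [hGrec i q (by rintro ⟨rfl, rfl⟩; omega),
            hGrec i (q+1) (by rintro ⟨rfl, h2⟩; omega)]
          exact f1 i q hi hq (by omega)
        · intro i q hi hq hqa hqa'
          rw [hGrec i q (by rintro ⟨rfl, rfl⟩; omega),
            hGrec (i+1) q (by
              rintro ⟨h1, rfl⟩
              rw [h1] at hqa'
              omega)]
          exact f2 i q hi hq (le_trans hqa (hAmle i)) (le_trans hqa' (hAmle (i+1)))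
        · intro i q hi hq hqa
          rw [hGrec i q (by rintro ⟨rfl, rfl⟩; omega)]
          exact f3 i q hi hq (le_trans hqa (hAmle i))
        · intro i q hi hqa hqa'
          have hAmle1 : Am (i+1) ≤ A (i+1) := hAmle (i+1)
          by_cases hii' : i + 1 = i1
          · have hprA := hprevN i hii'
            have ha1 : Am (i + 1) = A (i + 1) - 1 := by rw [hii']; exact hAmi0
            have hAma : Am i ≤ A i := hAmle i
            have hq1 : q = A i1 := by
              by_cases hii : i = i1
              · omega
              · rw [hAmne i hii] at hqa'
                rw [hii'] at hqa
                omega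
            rw [hGrec i q (by rintro ⟨rfl, _⟩; omega), hq1]
            have hf2 := f2 i (A i1) hi (by omega) (by omega) (by rw [hii'])
            rw [hii'] at hf2 ⊢
            omega
          · have ha1 : Am (i + 1) = A (i + 1) := hAmne _ hii'
            by_cases hii : i = i1
            · subst hii
              rw [hGrec i1 q (by rintro ⟨_, rfl⟩; omega)]
              exact f4 i1 q hi (by omega) (by omega)
            · have ha0 : Am i = A i := hAmne _ hii
              rw [hGrec i q (by rintro ⟨rfl, _⟩; omega)]
              exact f4 i q hi (by omega) (by omega)
        · -- addBox recovers F
          funext i q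
          simp only [addBox, hG]
          by_cases hb : i = i1 ∧ q = A i1
          · obtain ⟨rfl, rfl⟩ := hb
            rw [if_pos ⟨rfl, hAi1⟩]
            omega
          · rw [if_neg (by rintro ⟨rfl, rfl⟩; exact hb ⟨rfl, hAi1.symm⟩), if_neg hb]
    · rintro (hF | ⟨G, hG, rfl⟩)
      · exact L1 F hF
      · exact L2 G hG
  · rw [Set.disjoint_left]
    rintro F hF ⟨G, hG, rfl⟩
    simp only [Set.mem_setOf_eq] at hF
    obtain ⟨f0, f1, f2, f3, f4⟩ := hF
    have h3 := (f3 i1 (A i1) hi1r hApos le_rfl).1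
    have hv : addBox i1 (α i0) (nf i0) G i1 (A i1) = nf i0 := by
      simp [addBox, hAi1]
    rw [hv, hNp0] at h3
    omega

end
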